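/- Let m be a non-negative integer and α > 0. Then there is an η > 0, depending only on m and α, with the following property: if X is a metric space and f : [0,1]^{1+m} → X is 1-Lipschitz with diam(f([0,1]^{1+m})) ≥ α, then the (1,m)-mapping content satisfies H^{1,m}_∞(f, [0,1]^{1+m}) ≥ η. -/

import Mathlib

open Metric Set MeasureTheory ENNReal

noncomputable section

/-- The `k`-dimensional Hausdorff content of a set in a metric space, defined via
countable covers by closed balls. -/
def hContent {X : Type*} [MetricSpace X] (k : ℕ) (S : Set X) : ℝ≥0∞ :=
  ⨅ (B : ℕ → Set X) (_ : S ⊆ ⋃ i, B i) (_ : ∀ i, ∃ x r, B i = Metric.closedBall x r),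
    ∑' i, EMetric.diam (B i) ^ k

/-- The `k`-dimensional Hausdorff measure of a set in a metric space, defined via
countable covers by closed balls of diameter at most `δ`, letting `δ → 0`. -/
def hMeasure {X : Type*} [MetricSpace X] (k : ℕ) (S : Set X) : ℝ≥0∞ :=
  ⨆ (δ : ℝ≥0∞) (_ : 0 < δ),
    ⨅ (B : ℕ → Set X) (_ : S ⊆ ⋃ i, B i)
      (_ : ∀ i, (∃ x r, B i = Metric.closedBall x r) ∧ EMetric.diam (B i) ≤ δ),
      ∑' i, EMetric.diam (B i) ^ k

/-- The closed unit cube `[0,1]^d` in `ℝ^d`. -/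
def unitCube (d : ℕ) : Set (EuclideanSpace ℝ (Fin d)) :=
  {p | ∀ i, p i ∈ Set.Icc (0 : ℝ) 1}

/-- A dyadic subcube of `[0,1]^d`: it has side length `2⁻ᵏ` and lower-left corner `z/2ᵏ`. -/
structure DyadicCube (d : ℕ) : Type where
  k : ℕ
  z : Fin d → ℕ
  hz : ∀ i, z i + 1 ≤ 2 ^ k

namespace DyadicCube

/-- The side length of a dyadic cube. -/
def side {d : ℕ} (Q : DyadicCube d) : ℝ := (2 : ℝ)⁻¹ ^ Q.k

/-- The center of a dyadic cube. -/
def center {d : ℕ} (Q : DyadicCube d) (i : Fin d) : ℝ :=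
  ((Q.z i : ℝ) + 1 / 2) * (2 : ℝ)⁻¹ ^ Q.k

/-- The dyadic cube as a (closed) subset of `ℝ^d`. -/
def toSet {d : ℕ} (Q : DyadicCube d) : Set (EuclideanSpace ℝ (Fin d)) :=
  {p | ∀ i, |p i - Q.center i| ≤ Q.side / 2}

/-- `Q.scaled λ` is the cube `λQ`, with the same center as `Q` and `λ` times the side length. -/
def scaled {d : ℕ} (Q : DyadicCube d) (lam : ℝ) : Set (EuclideanSpace ℝ (Fin d)) :=
  {p | ∀ i, |p i - Q.center i| ≤ lam * Q.side / 2}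

end DyadicCube

/-- The `(n,m)`-mapping content `H^{n,m}_∞(f, A)`: the infimum of
`∑ H^n_∞(f(Q_i)) side(Q_i)^m` over countable covers of `A` by dyadic cubes of `[0,1]^{n+m}`
with pairwise disjoint interiors. -/
def mContent (n m : ℕ) {X : Type*} [MetricSpace X]
    (f : EuclideanSpace ℝ (Fin (n + m)) → X)
    (A : Set (EuclideanSpace ℝ (Fin (n + m)))) : ℝ≥0∞ :=
  ⨅ (S : Set (DyadicCube (n + m))) (_ : A ⊆ ⋃ Q ∈ S, Q.toSet)
    (_ : S.Pairwise fun Q Q' => interior Q.toSet ∩ interior Q'.toSet = ∅),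
    ∑' Q : S, hContent n (f '' Q.1.toSet) * ENNReal.ofReal (Q.1.side ^ m)

/-- The alternative `(n,m)`-mapping content `Ĥ^{n,m}_∞(f, A)`: the infimum of
`∑ H^n_∞(f(S_i)) diam(S_i)^m` over countable covers of `A` by arbitrary subsets of
`[0,1]^{n+m}`. -/
def altMContent (n m : ℕ) {X : Type*} [MetricSpace X]
    (f : EuclideanSpace ℝ (Fin (n + m)) → X)
    (A : Set (EuclideanSpace ℝ (Fin (n + m)))) : ℝ≥0∞ :=
  ⨅ (S : ℕ → Set (EuclideanSpace ℝ (Fin (n + m)))) (_ : A ⊆ ⋃ i, S i)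
    (_ : ∀ i, S i ⊆ unitCube (n + m)),
    ∑' i, hContent n (f '' S i) * EMetric.diam (S i) ^ m

/-- The first `n` coordinates of a point of `ℝ^{n+m} = ℝ^n × ℝ^m`. -/
def xpart (n m : ℕ) (p : EuclideanSpace ℝ (Fin (n + m))) : EuclideanSpace ℝ (Fin n) :=
  WithLp.toLp 2 fun i => p (Fin.castAdd m i)

/-- The last `m` coordinates of a point of `ℝ^{n+m} = ℝ^n × ℝ^m`. -/
def ypart (n m : ℕ) (p : EuclideanSpace ℝ (Fin (n + m))) : EuclideanSpace ℝ (Fin m) :=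
  WithLp.toLp 2 fun j => p (Fin.natAdd n j)

/-- The point `(x, y) ∈ ℝ^{n+m}` built from `x ∈ ℝ^n`, `y ∈ ℝ^m`. -/
def pairup (n m : ℕ) (x : EuclideanSpace ℝ (Fin n)) (y : EuclideanSpace ℝ (Fin m)) :
    EuclideanSpace ℝ (Fin (n + m)) :=
  WithLp.toLp 2 fun i => Fin.addCases (fun i₁ => x i₁) (fun j => y j) i

/-- The horizontal slice `E_y = E ∩ (ℝ^n × {y})`. -/
def cubeSlice (n m : ℕ) (E : Set (EuclideanSpace ℝ (Fin (n + m))))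
    (y : EuclideanSpace ℝ (Fin m)) : Set (EuclideanSpace ℝ (Fin (n + m))) :=
  {p ∈ E | ypart n m p = y}

/-- `f` is `C`-bi-Lipschitz on `s`. -/
def BiLipschitzOnWith {α β : Type*} [PseudoMetricSpace α] [PseudoMetricSpace β]
    (C : ℝ) (f : α → β) (s : Set α) : Prop :=
  ∀ x ∈ s, ∀ y ∈ s, C⁻¹ * dist x y ≤ dist (f x) (f y) ∧ dist (f x) (f y) ≤ C * dist x y

/-- `(E, g)` is a Hard Sard pair for `f` with constant `C`:
(i) `g` is a globally `C`-bi-Lipschitz homeomorphism of `ℝ^{n+m}` (in particular it restricts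
to a bi-Lipschitz map on `E`);
(ii) writing `F = f ∘ g⁻¹`, for `(x,y), (x',y') ∈ g(E)` one has `F(x,y) = F(x',y')` iff `x = x'`;
(iii) the map `(x,y) ↦ (F(x,y), y)` is `C`-bi-Lipschitz on `g(E)`, where `X × ℝ^m` carries the
max metric.  Conditions (ii) and (iii) are expressed at points `p = g⁻¹(x,y)`, `q = g⁻¹(x',y')`
of `E`. -/
def IsHardSardPairWith (n m : ℕ) {X : Type*} [MetricSpace X]
    (f : EuclideanSpace ℝ (Fin (n + m)) → X)
    (E : Set (EuclideanSpace ℝ (Fin (n + m))))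
    (g : EuclideanSpace ℝ (Fin (n + m)) → EuclideanSpace ℝ (Fin (n + m)))
    (C : ℝ) : Prop :=
  Function.Surjective g ∧
  BiLipschitzOnWith C g Set.univ ∧
  (∀ p ∈ E, ∀ q ∈ E, (f p = f q ↔ xpart n m (g p) = xpart n m (g q))) ∧
  (∀ p ∈ E, ∀ q ∈ E,
    C⁻¹ * dist (g p) (g q) ≤ dist (f p, ypart n m (g p)) (f q, ypart n m (g q)) ∧
    dist (f p, ypart n m (g p)) (f q, ypart n m (g q)) ≤ C * dist (g p) (g q))

/-- `E` is a Hard Sard set for `f` with constant `C`. -/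
def IsHardSardSetWith (n m : ℕ) {X : Type*} [MetricSpace X]
    (f : EuclideanSpace ℝ (Fin (n + m)) → X)
    (E : Set (EuclideanSpace ℝ (Fin (n + m)))) (C : ℝ) : Prop :=
  ∃ g, IsHardSardPairWith n m f E g C

/-- `sup_{x,y ∈ s} | d(f(x), f(y)) - N(x - y) |`. -/
def mdSup {d : ℕ} {X : Type*} [MetricSpace X] (f : EuclideanSpace ℝ (Fin d) → X)
    (s : Set (EuclideanSpace ℝ (Fin d))) (N : Seminorm ℝ (EuclideanSpace ℝ (Fin d))) : ℝ :=
  ⨆ x : s, ⨆ y : s, |dist (f x.1) (f y.1) - N (x.1 - y.1)|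

/-- `md_f` on a set `s` (a cube of side length `side`):
`side⁻¹ · inf_N sup_{x,y ∈ s} | d(f(x), f(y)) - N(x-y) |`, the infimum being over all
seminorms `N` on `ℝ^d`. -/
def mdf {d : ℕ} {X : Type*} [MetricSpace X] (f : EuclideanSpace ℝ (Fin d) → X)
    (s : Set (EuclideanSpace ℝ (Fin d))) (side : ℝ) : ℝ :=
  side⁻¹ * ⨅ N : Seminorm ℝ (EuclideanSpace ℝ (Fin d)), mdSup f s N

/-- The coordinate plane spanned by the standard basis vectors `e_i`, `i ∈ s`. -/
def coordPlane {d : ℕ} (s : Finset (Fin d)) : Submodule ℝ (EuclideanSpace ℝ (Fin d)) :=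
  Submodule.span ℝ {v | ∃ i ∈ s, v = EuclideanSpace.single i (1 : ℝ)}



section Aux

open Metric Set MeasureTheory ENNReal

lemma pi_set_eq (d : ℕ) (s : Fin d → Set ℝ) :
    {p : EuclideanSpace ℝ (Fin d) | ∀ i, p i ∈ s i} =
      (MeasurableEquiv.toLp 2 (Fin d → ℝ)).symm ⁻¹' (Set.univ.pi s) := by
  ext p
  simp [Set.mem_pi]

lemma measurableSet_piSet (d : ℕ) (s : Fin d → Set ℝ) (hs : ∀ i, MeasurableSet (s i)) :
    MeasurableSet {p : EuclideanSpace ℝ (Fin d) | ∀ i, p i ∈ s i} := by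
  rw [pi_set_eq]
  exact (MeasurableEquiv.toLp 2 (Fin d → ℝ)).symm.measurable (MeasurableSet.univ_pi hs)

lemma volume_piSet (d : ℕ) (s : Fin d → Set ℝ) (hs : ∀ i, MeasurableSet (s i)) :
    volume {p : EuclideanSpace ℝ (Fin d) | ∀ i, p i ∈ s i} = ∏ i, volume (s i) := by
  rw [pi_set_eq,
    (EuclideanSpace.volume_preserving_symm_measurableEquiv_toLp (Fin d)).measure_preimage
      (MeasurableSet.univ_pi hs).nullMeasurableSet,
    volume_pi_pi]

lemma chain_bound {X : Type*} [MetricSpace X] {ι : Type*} [Countable ι] (g : ℝ → X) {a b : ℝ}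
    (hab : a ≤ b) (hg : ContinuousOn g (Icc a b)) (C : ι → Set ℝ)
    (hcov : Icc a b ⊆ ⋃ j, C j) :
    edist (g a) (g b) ≤ ∑' j, EMetric.diam (g '' (C j ∩ Icc a b)) := by
  set h : ℝ → ℝ := fun t => dist (g a) (g t) with hh
  have hhc : ContinuousOn h (Icc a b) :=
    (continuous_const.dist continuous_id).comp_continuousOn hg
  have h0 : h a = 0 := dist_self _
  have key : Icc (0:ℝ) (h b) ⊆ h '' Icc a b := by
    rw [← h0]; exact intermediate_value_Icc hab hhc
  have hsub : h '' Icc a b ⊆ ⋃ j, h '' (C j ∩ Icc a b) := by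
    rintro x ⟨t, ht, rfl⟩
    obtain ⟨j, hj⟩ := mem_iUnion.1 (hcov ht)
    exact mem_iUnion.2 ⟨j, mem_image_of_mem h ⟨hj, ht⟩⟩
  calc edist (g a) (g b) = ENNReal.ofReal (h b) := edist_dist _ _
    _ = volume (Icc (0:ℝ) (h b)) := by rw [Real.volume_Icc, sub_zero]
    _ ≤ volume (⋃ j, h '' (C j ∩ Icc a b)) := measure_mono (key.trans hsub)
    _ ≤ ∑' j, volume (h '' (C j ∩ Icc a b)) := measure_iUnion_le _
    _ ≤ ∑' j, EMetric.diam (h '' (C j ∩ Icc a b)) :=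
        ENNReal.tsum_le_tsum fun j => Real.volume_le_diam _
    _ ≤ ∑' j, EMetric.diam (g '' (C j ∩ Icc a b)) := ENNReal.tsum_le_tsum fun j => ?_
  apply EMetric.diam_le
  rintro x ⟨t, ht, rfl⟩ y ⟨t', ht', rfl⟩
  have h1 : dist (h t) (h t') ≤ dist (g t) (g t') := by
    rw [Real.dist_eq]
    simpa [hh, dist_comm] using abs_dist_sub_le (g t) (g t') (g a)
  calc edist (h t) (h t') = ENNReal.ofReal (dist (h t) (h t')) := edist_dist _ _
    _ ≤ ENNReal.ofReal (dist (g t) (g t')) := ENNReal.ofReal_le_ofReal h1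
    _ = edist (g t) (g t') := (edist_dist _ _).symm
    _ ≤ _ := EMetric.edist_le_diam_of_mem (mem_image_of_mem _ ht) (mem_image_of_mem _ ht')

instance countableDyadic (d : ℕ) : Countable (DyadicCube d) := by
  have : Function.Injective (fun Q : DyadicCube d => (Q.k, Q.z)) := by
    rintro ⟨k, z, h⟩ ⟨k', z', h'⟩ h2
    simp only [Prod.mk.injEq] at h2
    obtain ⟨rfl, rfl⟩ := h2
    rfl
  exact this.countable

end Aux


section Aux2

open Metric Set MeasureTheory ENNReal

variable {d : ℕ}


/-- `Function.update` as a map of Euclidean space (to pin down the metric instance). -/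
def updE (w : EuclideanSpace ℝ (Fin d)) (i0 : Fin d) (t : ℝ) : EuclideanSpace ℝ (Fin d) :=
  WithLp.toLp 2 (Function.update w i0 t)

@[simp] lemma updE_apply (w : EuclideanSpace ℝ (Fin d)) (i0 : Fin d) (t : ℝ) (i : Fin d) :
    updE w i0 t i = if i = i0 then t else w i := by
  simp [updE, Function.update_apply]

lemma coord_dist_le (w w' : EuclideanSpace ℝ (Fin d)) (i : Fin d) :
    dist (w i) (w' i) ≤ dist w w' := by
  rw [EuclideanSpace.dist_eq]
  have h1 : dist (w i) (w' i) ^ 2 ≤ ∑ j, dist (w j) (w' j) ^ 2 :=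
    Finset.single_le_sum (f := fun j => dist (w j) (w' j) ^ 2)
      (fun j _ => sq_nonneg _) (Finset.mem_univ i)
  calc dist (w i) (w' i) = Real.sqrt (dist (w i) (w' i) ^ 2) :=
        (Real.sqrt_sq dist_nonneg).symm
    _ ≤ _ := Real.sqrt_le_sqrt h1

lemma dist_le_of_coords (w w' : EuclideanSpace ℝ (Fin d)) {c : ℝ} (hc : 0 ≤ c)
    (h : ∀ i, dist (w i) (w' i) ≤ c) : dist w w' ≤ d * c := by
  rw [EuclideanSpace.dist_eq]
  have h1 : ∑ j, dist (w j) (w' j) ^ 2 ≤ (d : ℝ) * c ^ 2 := by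
    calc ∑ j, dist (w j) (w' j) ^ 2 ≤ ∑ _j : Fin d, c ^ 2 :=
          Finset.sum_le_sum fun j _ => pow_le_pow_left₀ dist_nonneg (h j) 2
      _ = (d : ℝ) * c ^ 2 := by simp [Finset.sum_const, nsmul_eq_mul]
  have h2 : (d : ℝ) * c ^ 2 ≤ (d * c) ^ 2 := by
    rcases Nat.eq_zero_or_pos d with rfl | hd
    · simp
    · have hd1 : (1:ℝ) ≤ (d:ℝ) := by exact_mod_cast hd
      nlinarith [sq_nonneg c]
  calc Real.sqrt (∑ j, dist (w j) (w' j) ^ 2) ≤ Real.sqrt ((d * c)^2) :=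
        Real.sqrt_le_sqrt (h1.trans h2)
    _ = d * c := Real.sqrt_sq (by positivity)

lemma dist_updE_le (i0 : Fin d) (w w' : EuclideanSpace ℝ (Fin d)) (t : ℝ) :
    dist (updE w i0 t) (updE w' i0 t) ≤ dist w w' := by
  simp only [EuclideanSpace.dist_eq]
  apply Real.sqrt_le_sqrt
  apply Finset.sum_le_sum
  intro j _
  rcases eq_or_ne j i0 with rfl | hj
  · simp
  · simp [hj]

lemma lipschitz_updE (i0 : Fin d) (w : EuclideanSpace ℝ (Fin d)) :
    LipschitzWith 1 (fun t : ℝ => updE w i0 t) := by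
  apply LipschitzWith.of_dist_le_mul
  intro s t
  rw [EuclideanSpace.dist_eq]
  have hb : ∀ j : Fin d, dist (updE w i0 s j) (updE w i0 t j) ^ 2 ≤
      (if j = i0 then dist s t ^ 2 else 0) := by
    intro j
    rcases eq_or_ne j i0 with rfl | hj
    · simp
    · simp [hj]
  calc Real.sqrt (∑ j, dist (updE w i0 s j) (updE w i0 t j) ^ 2)
      ≤ Real.sqrt (∑ j, if j = i0 then dist s t ^ 2 else 0) :=
        Real.sqrt_le_sqrt (Finset.sum_le_sum fun j _ => hb j)
    _ = Real.sqrt (dist s t ^ 2) := by rw [Finset.sum_ite_eq' Finset.univ i0]; simp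
    _ = 1 * dist s t := by rw [Real.sqrt_sq dist_nonneg]; ring


lemma dist_le_card_of_unitCube {x y : EuclideanSpace ℝ (Fin d)}
    (hx : x ∈ unitCube d) (hy : y ∈ unitCube d) : dist x y ≤ d := by
  have h := dist_le_of_coords x y (c := 1) one_pos.le (fun i => by
    have hxi := hx i; have hyi := hy i
    rw [Real.dist_eq]
    exact abs_le.2 ⟨by linarith [hxi.1, hxi.2, hyi.1, hyi.2],
      by linarith [hxi.1, hxi.2, hyi.1, hyi.2]⟩)
  simpa using h

lemma ediam_image_unitCube {X : Type*} [MetricSpace X] {f : EuclideanSpace ℝ (Fin d) → X}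
    (hf : LipschitzOnWith 1 f (unitCube d)) :
    EMetric.diam (f '' unitCube d) ≤ ENNReal.ofReal d := by
  apply EMetric.diam_le
  rintro x ⟨a, ha, rfl⟩ y ⟨b, hb, rfl⟩
  rw [edist_dist]
  refine ENNReal.ofReal_le_ofReal ?_
  have h1 := hf.dist_le_mul a ha b hb
  have h2 : dist (f a) (f b) ≤ dist a b := by simpa using h1
  exact h2.trans (dist_le_card_of_unitCube ha hb)

lemma toSet_subset_unitCube (Q : DyadicCube d) : Q.toSet ⊆ unitCube d := by
  intro p hp i
  have h := hp i
  have hs : (0:ℝ) < (2:ℝ)⁻¹ ^ Q.k := by positivity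
  have hz : (Q.z i : ℝ) + 1 ≤ 2 ^ Q.k := by exact_mod_cast Q.hz i
  have key : (2:ℝ)⁻¹ ^ Q.k * 2 ^ Q.k = 1 := by
    rw [inv_pow]
    field_simp
  have hzn : (0:ℝ) ≤ (Q.z i : ℝ) := Nat.cast_nonneg _
  rw [DyadicCube.center, DyadicCube.side] at h
  have habs := abs_le.1 h
  constructor
  · nlinarith [habs.1, mul_nonneg hzn hs.le]
  · nlinarith [habs.2, mul_le_mul_of_nonneg_right hz hs.le]

lemma updE_mem_unitCube {w : EuclideanSpace ℝ (Fin d)} {i0 : Fin d} {t : ℝ}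
    (hw : w ∈ unitCube d) (ht : t ∈ Icc (0:ℝ) 1) : updE w i0 t ∈ unitCube d := by
  intro i
  rw [updE_apply]
  split_ifs
  · exact ht
  · exact hw i

/-- The set of parameters `t` with `updE w i0 t ∈ Q`. -/
def Tseg (i0 : Fin d) (Q : DyadicCube d) (w : EuclideanSpace ℝ (Fin d)) : Set ℝ :=
  {t | updE w i0 t ∈ Q.toSet}

/-- The diameter of the image under `f` of the part of the line through `w` in direction `i0`
lying in the cube `Q` (and in `[0,1]` in the `i0` coordinate). -/
def Gdiam {X : Type*} [MetricSpace X] (f : EuclideanSpace ℝ (Fin d) → X) (i0 : Fin d)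
    (Q : DyadicCube d) (w : EuclideanSpace ℝ (Fin d)) : ℝ≥0∞ :=
  EMetric.diam ((fun t => f (updE w i0 t)) '' (Tseg i0 Q w ∩ Icc 0 1))

/-- The slab of points whose non-`i0` coordinates satisfy the constraints of `Q`. -/
def Kslab (i0 : Fin d) (Q : DyadicCube d) : Set (EuclideanSpace ℝ (Fin d)) :=
  {w | ∀ i, w i ∈ (if i = i0 then (univ : Set ℝ)
    else Icc (Q.center i - Q.side/2) (Q.center i + Q.side/2))}

lemma measurableSet_Kslab (i0 : Fin d) (Q : DyadicCube d) : MeasurableSet (Kslab i0 Q) :=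
  measurableSet_piSet d _ (fun i => by split_ifs <;> [exact MeasurableSet.univ;
    exact measurableSet_Icc])

lemma mem_Kslab_iff (i0 : Fin d) (Q : DyadicCube d) (w : EuclideanSpace ℝ (Fin d)) :
    w ∈ Kslab i0 Q ↔ ∀ i, i ≠ i0 → |w i - Q.center i| ≤ Q.side / 2 := by
  constructor
  · intro h i hi
    have := h i
    rw [if_neg hi] at this
    exact abs_le.2 ⟨by linarith [this.1], by linarith [this.2]⟩
  · intro h i
    rcases eq_or_ne i i0 with rfl | hi
    · simp
    · rw [if_neg hi]
      have := abs_le.1 (h i hi)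
      exact ⟨by linarith [this.1], by linarith [this.2]⟩

lemma Tseg_empty {i0 : Fin d} {Q : DyadicCube d} {w : EuclideanSpace ℝ (Fin d)}
    (hw : w ∉ Kslab i0 Q) : Tseg i0 Q w = ∅ := by
  rw [mem_Kslab_iff] at hw
  push_neg at hw
  obtain ⟨i, hi, habs⟩ := hw
  ext t
  simp only [Tseg, mem_setOf_eq, mem_empty_iff_false, iff_false]
  intro h
  have := h i
  rw [updE_apply, if_neg hi] at this
  exact absurd this (not_le.2 habs)

lemma Gdiam_zero {X : Type*} [MetricSpace X] (f : EuclideanSpace ℝ (Fin d) → X) {i0 : Fin d}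
    {Q : DyadicCube d} {w : EuclideanSpace ℝ (Fin d)} (hw : w ∉ Kslab i0 Q) :
    Gdiam f i0 Q w = 0 := by
  rw [Gdiam, Tseg_empty hw]
  simp
  exact Metric.ediam_empty

lemma Tseg_eq_of_mem {i0 : Fin d} {Q : DyadicCube d} {w : EuclideanSpace ℝ (Fin d)}
    (hw : w ∈ Kslab i0 Q) :
    Tseg i0 Q w = Icc (Q.center i0 - Q.side/2) (Q.center i0 + Q.side/2) := by
  rw [mem_Kslab_iff] at hw
  ext t
  simp only [Tseg, mem_setOf_eq, mem_Icc]
  constructor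
  · intro h
    have := h i0
    rw [updE_apply, if_pos rfl] at this
    have := abs_le.1 this
    exact ⟨by linarith [this.1], by linarith [this.2]⟩
  · intro h i
    rcases eq_or_ne i i0 with rfl | hii
    · rw [updE_apply, if_pos rfl]
      exact abs_le.2 ⟨by linarith [h.1], by linarith [h.2]⟩
    · rw [updE_apply, if_neg hii]
      exact hw i hii

lemma Gdiam_le_ediam {X : Type*} [MetricSpace X] (f : EuclideanSpace ℝ (Fin d) → X)
    (i0 : Fin d) (Q : DyadicCube d) (w : EuclideanSpace ℝ (Fin d)) :
    Gdiam f i0 Q w ≤ EMetric.diam (f '' Q.toSet) := by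
  apply EMetric.diam_mono
  rintro x ⟨t, ht, rfl⟩
  exact mem_image_of_mem f ht.1

end Aux2


section Aux3

open Metric Set MeasureTheory ENNReal

variable {d : ℕ} {X : Type*} [MetricSpace X]

lemma Tseg_between {i0 : Fin d} {Q : DyadicCube d} {w : EuclideanSpace ℝ (Fin d)} {s s' t : ℝ}
    (hs : s ∈ Tseg i0 Q w) (hs' : s' ∈ Tseg i0 Q w) (ht : t ∈ Icc s s') :
    t ∈ Tseg i0 Q w := by
  intro i
  have h1 := hs i
  have h2 := hs' i
  rcases eq_or_ne i i0 with rfl | hi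
  · rw [updE_apply, if_pos rfl] at h1 h2 ⊢
    have h1' := abs_le.1 h1
    have h2' := abs_le.1 h2
    exact abs_le.2 ⟨by linarith [ht.1, h1'.1], by linarith [ht.2, h2'.2]⟩
  · rw [updE_apply, if_neg hi] at h1 ⊢
    exact h1

lemma Gdiam_le_hContent (f : EuclideanSpace ℝ (Fin d) → X)
    (hf : LipschitzOnWith 1 f (unitCube d)) (i0 : Fin d) (Q : DyadicCube d)
    (w : EuclideanSpace ℝ (Fin d)) :
    Gdiam f i0 Q w ≤ hContent 1 (f '' Q.toSet) := by
  refine le_iInf fun B => le_iInf fun hBcov => le_iInf fun _ => ?_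
  apply EMetric.diam_le
  have H : ∀ s ∈ Tseg i0 Q w ∩ Icc 0 1, ∀ s' ∈ Tseg i0 Q w ∩ Icc 0 1, s ≤ s' →
      edist (f (updE w i0 s)) (f (updE w i0 s')) ≤ ∑' j, EMetric.diam (B j) ^ 1 := by
    intro s hs s' hs' hss
    have hTc : ∀ t ∈ Icc s s', updE w i0 t ∈ Q.toSet :=
      fun t ht => Tseg_between hs.1 hs'.1 ht
    have hg : ContinuousOn (fun t => f (updE w i0 t)) (Icc s s') := by
      apply hf.continuousOn.comp ((lipschitz_updE i0 w).continuous.continuousOn)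
      exact fun t ht => toSet_subset_unitCube Q (hTc t ht)
    have hcov : Icc s s' ⊆ ⋃ j, (fun t => f (updE w i0 t)) ⁻¹' (B j) := by
      intro t ht
      have : f (updE w i0 t) ∈ ⋃ j, B j := hBcov (mem_image_of_mem f (hTc t ht))
      simpa using this
    have hch := chain_bound (fun t => f (updE w i0 t)) hss hg _ hcov
    refine hch.trans (ENNReal.tsum_le_tsum fun j => ?_)
    rw [pow_one]
    apply EMetric.diam_mono
    rintro x ⟨t, ht, rfl⟩
    exact ht.1
  rintro x ⟨s, hs, rfl⟩ y ⟨s', hs', rfl⟩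
  rcases le_total s s' with h | h
  · exact H s hs s' hs' h
  · rw [edist_comm]
    exact H s' hs' s hs h

lemma Gdiam_ne_top (f : EuclideanSpace ℝ (Fin d) → X)
    (hf : LipschitzOnWith 1 f (unitCube d)) (i0 : Fin d) (Q : DyadicCube d)
    (w : EuclideanSpace ℝ (Fin d)) : Gdiam f i0 Q w ≠ ⊤ := by
  have h1 : Gdiam f i0 Q w ≤ EMetric.diam (f '' unitCube d) :=
    (Gdiam_le_ediam f i0 Q w).trans
      (EMetric.diam_mono (image_mono (f := f) (toSet_subset_unitCube Q)))
  exact ((h1.trans (ediam_image_unitCube hf)).trans_lt ENNReal.ofReal_lt_top).ne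

lemma Gdiam_osc (f : EuclideanSpace ℝ (Fin d) → X)
    (hf : LipschitzOnWith 1 f (unitCube d)) (i0 : Fin d) (Q : DyadicCube d)
    {w w' : EuclideanSpace ℝ (Fin d)} (hw : w ∈ Kslab i0 Q) (hw' : w' ∈ Kslab i0 Q) :
    Gdiam f i0 Q w ≤ Gdiam f i0 Q w' + ENNReal.ofReal (2 * dist w w') := by
  rw [Gdiam]
  apply EMetric.diam_le
  rintro x ⟨s, hs, rfl⟩ y ⟨t, ht, rfl⟩
  have hTT : Tseg i0 Q w = Tseg i0 Q w' := by
    rw [Tseg_eq_of_mem hw, Tseg_eq_of_mem hw']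
  have hsw : updE w i0 s ∈ Q.toSet := hs.1
  have htw : updE w i0 t ∈ Q.toSet := ht.1
  have hsw' : updE w' i0 s ∈ Q.toSet := by
    have : s ∈ Tseg i0 Q w' := hTT ▸ hs.1
    exact this
  have htw' : updE w' i0 t ∈ Q.toSet := by
    have : t ∈ Tseg i0 Q w' := hTT ▸ ht.1
    exact this
  have hd1 : dist (f (updE w i0 s)) (f (updE w' i0 s)) ≤ dist w w' := by
    have h := hf.dist_le_mul _ (toSet_subset_unitCube Q hsw) _ (toSet_subset_unitCube Q hsw')
    have h2 : dist (f (updE w i0 s)) (f (updE w' i0 s)) ≤ dist (updE w i0 s) (updE w' i0 s) := by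
      simpa using h
    exact h2.trans (dist_updE_le i0 w w' s)
  have hd2 : dist (f (updE w' i0 t)) (f (updE w i0 t)) ≤ dist w w' := by
    have h := hf.dist_le_mul _ (toSet_subset_unitCube Q htw') _ (toSet_subset_unitCube Q htw)
    have h2 : dist (f (updE w' i0 t)) (f (updE w i0 t)) ≤ dist (updE w' i0 t) (updE w i0 t) := by
      simpa using h
    refine h2.trans ?_
    rw [dist_comm]
    exact dist_updE_le i0 w w' t
  have hmid : edist (f (updE w' i0 s)) (f (updE w' i0 t)) ≤ Gdiam f i0 Q w' := by
    apply EMetric.edist_le_diam_of_mem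
    · exact mem_image_of_mem _ ⟨hTT ▸ hs.1, hs.2⟩
    · exact mem_image_of_mem _ ⟨hTT ▸ ht.1, ht.2⟩
  calc edist (f (updE w i0 s)) (f (updE w i0 t))
      ≤ edist (f (updE w i0 s)) (f (updE w' i0 s)) +
        edist (f (updE w' i0 s)) (f (updE w' i0 t)) +
        edist (f (updE w' i0 t)) (f (updE w i0 t)) := edist_triangle4 _ _ _ _
    _ ≤ ENNReal.ofReal (dist w w') + Gdiam f i0 Q w' + ENNReal.ofReal (dist w w') := by
        refine add_le_add (add_le_add ?_ hmid) ?_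
        · rw [edist_dist]; exact ENNReal.ofReal_le_ofReal hd1
        · rw [edist_dist]; exact ENNReal.ofReal_le_ofReal hd2
    _ = Gdiam f i0 Q w' + ENNReal.ofReal (2 * dist w w') := by
        rw [ENNReal.ofReal_mul (by norm_num : (0:ℝ) ≤ 2), ENNReal.ofReal_ofNat, two_mul]
        ring

lemma aemeasurable_Gdiam (f : EuclideanSpace ℝ (Fin d) → X)
    (hf : LipschitzOnWith 1 f (unitCube d)) (i0 : Fin d) (Q : DyadicCube d)
    (μ : Measure (EuclideanSpace ℝ (Fin d))) :
    AEMeasurable (Gdiam f i0 Q) μ := by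
  have hK := measurableSet_Kslab i0 Q
  have hind : Gdiam f i0 Q = (Kslab i0 Q).indicator (Gdiam f i0 Q) := by
    funext w
    by_cases hw : w ∈ Kslab i0 Q
    · rw [indicator_of_mem hw]
    · rw [indicator_of_notMem hw, Gdiam_zero f hw]
  rw [hind, aemeasurable_indicator_iff hK]
  set gR : EuclideanSpace ℝ (Fin d) → ℝ := fun w => (Gdiam f i0 Q w).toReal with hgR
  have hlip : ∀ w ∈ Kslab i0 Q, ∀ w' ∈ Kslab i0 Q, dist (gR w) (gR w') ≤ 2 * dist w w' := by
    intro w hw w' hw'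
    have h1 := Gdiam_osc f hf i0 Q hw hw'
    have h2 := Gdiam_osc f hf i0 Q hw' hw
    rw [dist_comm w' w] at h2
    have hfin := Gdiam_ne_top f hf i0 Q
    have e1 : gR w ≤ gR w' + 2 * dist w w' := by
      have := ENNReal.toReal_mono (by
        exact ENNReal.add_ne_top.2 ⟨hfin w', ENNReal.ofReal_ne_top⟩) h1
      rwa [ENNReal.toReal_add (hfin w') ENNReal.ofReal_ne_top,
        ENNReal.toReal_ofReal (by positivity)] at this
    have e2 : gR w' ≤ gR w + 2 * dist w w' := by
      have := ENNReal.toReal_mono (by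
        exact ENNReal.add_ne_top.2 ⟨hfin w, ENNReal.ofReal_ne_top⟩) h2
      rwa [ENNReal.toReal_add (hfin w) ENNReal.ofReal_ne_top,
        ENNReal.toReal_ofReal (by positivity)] at this
    rw [Real.dist_eq]
    exact abs_le.2 ⟨by linarith, by linarith⟩
  have hcontR : ContinuousOn gR (Kslab i0 Q) := by
    have : LipschitzOnWith 2 gR (Kslab i0 Q) := by
      apply LipschitzOnWith.of_dist_le_mul
      intro x hx y hy
      simpa using hlip x hx y hy
    exact this.continuousOn
  have hcont : ContinuousOn (Gdiam f i0 Q) (Kslab i0 Q) := by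
    have h1 : ContinuousOn (fun w => ENNReal.ofReal (gR w)) (Kslab i0 Q) :=
      ENNReal.continuous_ofReal.comp_continuousOn hcontR
    apply h1.congr
    intro w _
    exact (ENNReal.ofReal_toReal (Gdiam_ne_top f hf i0 Q w)).symm
  exact hcont.aemeasurable hK

lemma prod_if_eq {d m : ℕ} (hdm : d = 1 + m) (i0 : Fin d) (a b : ℝ≥0∞) :
    ∏ i : Fin d, (if i = i0 then a else b) = a * b ^ m := by
  rw [← Finset.mul_prod_erase Finset.univ _ (Finset.mem_univ i0)]
  rw [if_pos rfl]
  congr 1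
  rw [Finset.prod_congr rfl (fun i hi => if_neg (Finset.ne_of_mem_erase hi)),
    Finset.prod_const, Finset.card_erase_of_mem (Finset.mem_univ i0),
    Finset.card_univ, Fintype.card_fin]
  congr 1
  omega

end Aux3

/-- **Theorem B.**  For every `m ≥ 0` and `α > 0` there is `η > 0`, depending only on `m` and
`α`, such that for every metric space `X` and `1`-Lipschitz `f : [0,1]^{1+m} → X` with
`diam f([0,1]^{1+m}) ≥ α`, one has `H^{1,m}_∞(f, [0,1]^{1+m}) ≥ η`. -/
theorem onedim_mapping_content (m : ℕ) (α : ℝ) (hα : 0 < α) :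
    ∃ η : ℝ, 0 < η ∧
      ∀ (X : Type*) [MetricSpace X] (f : EuclideanSpace ℝ (Fin (1 + m)) → X),
        LipschitzOnWith 1 f (unitCube (1 + m)) →
        ENNReal.ofReal α ≤ EMetric.diam (f '' unitCube (1 + m)) →
        ENNReal.ofReal η ≤ mContent 1 m f (unitCube (1 + m)) := by
  classical
  have hdR : (1:ℝ) ≤ ((1+m : ℕ) : ℝ) := by exact_mod_cast Nat.le_add_right 1 m
  have hdpos : (0:ℝ) < ((1+m : ℕ) : ℝ) := by linarith
  set β : ℝ := α / (2 * ((1+m : ℕ) : ℝ)) with hβdef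
  have hβ : 0 < β := div_pos hα (by linarith)
  set ρ : ℝ := min (β / (4 * ((1+m : ℕ) : ℝ))) (1/2) with hρdef
  have hρpos : 0 < ρ := lt_min (by positivity) (by norm_num)
  have hρhalf : ρ ≤ 1/2 := min_le_right _ _
  have hρβ : ((1+m : ℕ) : ℝ) * ρ ≤ β / 4 := by
    have h1 : ρ ≤ β / (4 * ((1+m : ℕ) : ℝ)) := min_le_left _ _
    have h2 : ((1+m : ℕ) : ℝ) * ρ ≤ ((1+m : ℕ) : ℝ) * (β / (4 * ((1+m : ℕ) : ℝ))) :=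
      mul_le_mul_of_nonneg_left h1 hdpos.le
    calc ((1+m : ℕ) : ℝ) * ρ ≤ ((1+m : ℕ) : ℝ) * (β / (4 * ((1+m : ℕ) : ℝ))) := h2
      _ = β / 4 := by field_simp
  refine ⟨β/2 * ρ^m, by positivity, ?_⟩
  intro X _ f hf hdiam
  -- two points with far-apart images
  obtain ⟨p, hp, q, hq, hpq⟩ : ∃ p ∈ unitCube (1+m), ∃ q ∈ unitCube (1+m),
      α/2 < dist (f p) (f q) := by
    by_contra hcon
    push_neg at hcon
    have hle : EMetric.diam (f '' unitCube (1+m)) ≤ ENNReal.ofReal (α/2) := by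
      apply EMetric.diam_le
      rintro x ⟨a, ha, rfl⟩ y ⟨b, hb, rfl⟩
      rw [edist_dist]
      exact ENNReal.ofReal_le_ofReal (hcon a ha b hb)
    have := hdiam.trans hle
    rw [ENNReal.ofReal_le_ofReal_iff (by linarith)] at this
    linarith
  -- a path of axis-parallel steps from p to q
  set r : ℕ → EuclideanSpace ℝ (Fin (1+m)) :=
    fun j => WithLp.toLp 2 fun i => if (i : ℕ) < j then q i else p i with hrdef
  have hr0 : r 0 = p := by ext i; simp [hrdef]
  have hrd : r (1+m) = q := by ext i; simp [hrdef, i.isLt]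
  have hrcube : ∀ j, r j ∈ unitCube (1+m) := by
    intro j i
    by_cases h : (i:ℕ) < j
    · simp only [hrdef, if_pos h]; exact hq i
    · simp only [hrdef, if_neg h]; exact hp i
  have hsum : dist (f p) (f q) ≤ ∑ j ∈ Finset.range (1+m), dist (f (r j)) (f (r (j+1))) := by
    have := dist_le_range_sum_dist (fun j => f (r j)) (1+m)
    rwa [hr0, hrd] at this
  obtain ⟨j, hjd, hstep⟩ : ∃ j, j < 1+m ∧ β ≤ dist (f (r j)) (f (r (j+1))) := by
    by_contra hcon
    push_neg at hcon
    have hlt : ∑ j ∈ Finset.range (1+m), dist (f (r j)) (f (r (j+1))) <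
        ∑ _j ∈ Finset.range (1+m), β := by
      apply Finset.sum_lt_sum_of_nonempty
      · exact ⟨0, Finset.mem_range.2 (by omega)⟩
      · intro j hj
        exact hcon j (Finset.mem_range.1 hj)
    rw [Finset.sum_const, Finset.card_range, nsmul_eq_mul] at hlt
    have hbeq : ((1+m : ℕ) : ℝ) * β = α / 2 := by
      rw [hβdef]; field_simp
    rw [hbeq] at hlt
    linarith
  set i0 : Fin (1+m) := ⟨j, hjd⟩ with hi0def
  set w0 : EuclideanSpace ℝ (Fin (1+m)) := r j with hw0def
  set t1 : ℝ := p i0 with ht1def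
  set t2 : ℝ := q i0 with ht2def
  have ht1 : t1 ∈ Icc (0:ℝ) 1 := hp i0
  have ht2 : t2 ∈ Icc (0:ℝ) 1 := hq i0
  have hw0a : updE w0 i0 t1 = w0 := by
    ext i
    rw [updE_apply]
    split_ifs with h
    · subst h
      simp [hw0def, hrdef, ht1def, hi0def]
    · rfl
  have hw0b : updE w0 i0 t2 = r (j+1) := by
    ext i
    rw [updE_apply]
    split_ifs with h
    · subst h
      simp [hrdef, ht2def, hi0def]
    · have hij : (i : ℕ) ≠ j := fun hc => h (Fin.ext hc)
      simp only [hw0def, hrdef]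
      have : (i:ℕ) < j ↔ (i:ℕ) < j + 1 := by omega
      by_cases h2 : (i:ℕ) < j
      · rw [if_pos h2, if_pos (by omega)]
      · rw [if_neg h2, if_neg (by omega)]
  have hstep' : β ≤ dist (f (updE w0 i0 t1)) (f (updE w0 i0 t2)) := by
    rw [hw0a, hw0b]; exact hstep
  -- the good region R
  set J : Fin (1+m) → Set ℝ := fun i => if i = i0 then Icc 0 1
    else (if w0 i + ρ ≤ 1 then Icc (w0 i) (w0 i + ρ) else Icc (w0 i - ρ) (w0 i)) with hJdef
  set R : Set (EuclideanSpace ℝ (Fin (1+m))) := {w | ∀ i, w i ∈ J i} with hRdef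
  have hJmeas : ∀ i, MeasurableSet (J i) := by
    intro i
    simp only [hJdef]
    split_ifs <;> exact measurableSet_Icc
  have hRmeas : MeasurableSet R := measurableSet_piSet (1+m) J hJmeas
  have hJsub : ∀ i, J i ⊆ Icc (0:ℝ) 1 := by
    intro i
    simp only [hJdef]
    have hw0i := (hrcube j) i
    split_ifs with h1 h2
    · exact subset_rfl
    · exact Icc_subset_Icc hw0i.1 h2
    · push_neg at h2
      exact Icc_subset_Icc (by linarith [hw0i.2]) hw0i.2
  have hRsub : R ⊆ unitCube (1+m) := fun w hw i => hJsub i (hw i)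
  have hRdist : ∀ w ∈ R, ∀ i, i ≠ i0 → dist (w i) (w0 i) ≤ ρ := by
    intro w hw i hi
    have hwi := hw i
    simp only [hJdef, if_neg hi] at hwi
    rw [Real.dist_eq]
    split_ifs at hwi with h2
    · exact abs_le.2 ⟨by linarith [hwi.1], by linarith [hwi.2]⟩
    · exact abs_le.2 ⟨by linarith [hwi.1], by linarith [hwi.2]⟩
  have hvolR : volume R = ENNReal.ofReal ρ ^ m := by
    rw [hRdef, volume_piSet (1+m) J hJmeas]
    have hv : ∀ i ∈ Finset.univ, volume (J i) =
        (if i = i0 then 1 else ENNReal.ofReal ρ) := by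
      intro i _
      rcases eq_or_ne i i0 with rfl | hi
      · simp only [hJdef, if_pos rfl, Real.volume_Icc]
        norm_num
      · simp only [hJdef, if_neg hi]
        split_ifs with h2
        · rw [Real.volume_Icc]; congr 1; ring
        · rw [Real.volume_Icc]; congr 1; ring
    rw [Finset.prod_congr rfl hv, prod_if_eq rfl i0, one_mul]
  -- lower bound on the endpoint distance on lines through R
  have hDlow : ∀ w ∈ R, β/2 ≤ dist (f (updE w i0 t1)) (f (updE w i0 t2)) := by
    intro w hw
    have hwc := hRsub hw
    have key : ∀ t ∈ Icc (0:ℝ) 1, dist (f (updE w i0 t)) (f (updE w0 i0 t)) ≤ β/4 := by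
      intro t ht
      have h1 : dist (updE w i0 t) (updE w0 i0 t) ≤ ((1+m : ℕ) : ℝ) * ρ := by
        apply dist_le_of_coords _ _ hρpos.le
        intro i
        rcases eq_or_ne i i0 with rfl | hi
        · simp only [updE_apply, if_pos rfl]
          simp [hρpos.le]
        · simp only [updE_apply, if_neg hi]
          exact hRdist w hw i hi
      have h2 := hf.dist_le_mul (updE w i0 t) (updE_mem_unitCube hwc ht)
        (updE w0 i0 t) (updE_mem_unitCube (hrcube j) ht)
      have h3 : dist (f (updE w i0 t)) (f (updE w0 i0 t)) ≤
          dist (updE w i0 t) (updE w0 i0 t) := by simpa using h2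
      linarith [hρβ]
    have k1 := key t1 ht1
    have k2 := key t2 ht2
    have htri := dist_triangle4 (f (updE w0 i0 t1)) (f (updE w i0 t1))
      (f (updE w i0 t2)) (f (updE w0 i0 t2))
    rw [dist_comm (f (updE w0 i0 t1)) (f (updE w i0 t1))] at htri
    have k2' : dist (f (updE w0 i0 t2)) (f (updE w i0 t2)) ≤ β / 4 := by
      rw [dist_comm]; exact k2
    linarith
  -- main estimate, for an arbitrary admissible cover
  refine le_iInf fun S => le_iInf fun hScov => le_iInf fun _ => ?_
  have hpoint : ∀ w ∈ R, ENNReal.ofReal (β/2) ≤ ∑' Q : S, Gdiam f i0 Q.1 w := by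
    intro w hw
    have hab : min t1 t2 ≤ max t1 t2 := min_le_max
    have habI : Icc (min t1 t2) (max t1 t2) ⊆ Icc (0:ℝ) 1 :=
      Icc_subset_Icc (le_min ht1.1 ht2.1) (max_le ht1.2 ht2.2)
    have hg : ContinuousOn (fun t => f (updE w i0 t)) (Icc (min t1 t2) (max t1 t2)) := by
      apply hf.continuousOn.comp ((lipschitz_updE i0 w).continuous.continuousOn)
      exact fun t ht => updE_mem_unitCube (hRsub hw) (habI ht)
    have hcov : Icc (min t1 t2) (max t1 t2) ⊆ ⋃ Q : S, Tseg i0 Q.1 w := by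
      intro t ht
      have h1 : updE w i0 t ∈ unitCube (1+m) := updE_mem_unitCube (hRsub hw) (habI ht)
      have h2 := hScov h1
      rw [mem_iUnion₂] at h2
      obtain ⟨Q, hQS, hQt⟩ := h2
      exact mem_iUnion.2 ⟨⟨Q, hQS⟩, hQt⟩
    have hch := chain_bound (fun t => f (updE w i0 t)) hab hg _ hcov
    have hend : ENNReal.ofReal (β/2) ≤
        edist (f (updE w i0 (min t1 t2))) (f (updE w i0 (max t1 t2))) := by
      have heq : dist (f (updE w i0 (min t1 t2))) (f (updE w i0 (max t1 t2))) =
          dist (f (updE w i0 t1)) (f (updE w i0 t2)) := by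
        rcases le_total t1 t2 with h | h
        · rw [min_eq_left h, max_eq_right h]
        · rw [min_eq_right h, max_eq_left h, dist_comm]
      rw [edist_dist, heq]
      exact ENNReal.ofReal_le_ofReal (hDlow w hw)
    refine hend.trans (hch.trans (ENNReal.tsum_le_tsum fun Q => ?_))
    exact EMetric.diam_mono (image_mono (inter_subset_inter_right _ habI))
  have hKRvol : ∀ Q : DyadicCube (1+m), volume (Kslab i0 Q ∩ R) ≤
      ENNReal.ofReal (Q.side ^ m) := by
    intro Q
    have hside : 0 ≤ Q.side := by rw [DyadicCube.side]; positivity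
    have hEq : Kslab i0 Q ∩ R = {w : EuclideanSpace ℝ (Fin (1+m)) | ∀ i, w i ∈
        ((if i = i0 then (univ : Set ℝ)
          else Icc (Q.center i - Q.side/2) (Q.center i + Q.side/2)) ∩ J i)} := by
      ext w
      constructor
      · rintro ⟨h1, h2⟩ i
        exact ⟨h1 i, h2 i⟩
      · intro h
        exact ⟨fun i => (h i).1, fun i => (h i).2⟩
    rw [hEq, volume_piSet (1+m) _ (fun i => by
      refine MeasurableSet.inter ?_ (hJmeas i)
      split_ifs
      · exact MeasurableSet.univ
      · exact measurableSet_Icc)]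
    calc ∏ i, volume ((if i = i0 then (univ : Set ℝ)
            else Icc (Q.center i - Q.side/2) (Q.center i + Q.side/2)) ∩ J i)
        ≤ ∏ i, (if i = i0 then 1 else ENNReal.ofReal Q.side) := by
          apply Finset.prod_le_prod'
          intro i _
          rcases eq_or_ne i i0 with rfl | hi
          · rw [if_pos rfl, if_pos rfl, univ_inter]
            have h9 : volume (J i0) ≤ volume (Icc (0:ℝ) 1) := measure_mono (hJsub i0)
            rw [Real.volume_Icc] at h9
            calc volume (J i0) ≤ ENNReal.ofReal (1 - 0) := h9
              _ = 1 := by norm_num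
          · rw [if_neg hi, if_neg hi]
            calc volume (Icc (Q.center i - Q.side/2) (Q.center i + Q.side/2) ∩ J i)
                ≤ volume (Icc (Q.center i - Q.side/2) (Q.center i + Q.side/2)) :=
                  measure_mono inter_subset_left
              _ = ENNReal.ofReal Q.side := by rw [Real.volume_Icc]; congr 1; ring
      _ = 1 * ENNReal.ofReal Q.side ^ m := prod_if_eq rfl i0 _ _
      _ = ENNReal.ofReal (Q.side ^ m) := by rw [one_mul, ← ENNReal.ofReal_pow hside]
  have perQ : ∀ Q : DyadicCube (1+m), ∫⁻ w in R, Gdiam f i0 Q w ≤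
      hContent 1 (f '' Q.toSet) * ENNReal.ofReal (Q.side ^ m) := by
    intro Q
    have hK := measurableSet_Kslab i0 Q
    have hGle : ∀ w, Gdiam f i0 Q w ≤
        (Kslab i0 Q).indicator (fun _ => hContent 1 (f '' Q.toSet)) w := by
      intro w
      by_cases hw : w ∈ Kslab i0 Q
      · rw [indicator_of_mem hw]
        exact Gdiam_le_hContent f hf i0 Q w
      · rw [indicator_of_notMem hw, Gdiam_zero f hw]
    calc ∫⁻ w in R, Gdiam f i0 Q w
        ≤ ∫⁻ w in R, (Kslab i0 Q).indicator (fun _ => hContent 1 (f '' Q.toSet)) w :=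
          lintegral_mono hGle
      _ = hContent 1 (f '' Q.toSet) * (volume.restrict R) (Kslab i0 Q) :=
          lintegral_indicator_const hK _
      _ = hContent 1 (f '' Q.toSet) * volume (Kslab i0 Q ∩ R) := by
          rw [Measure.restrict_apply hK]
      _ ≤ hContent 1 (f '' Q.toSet) * ENNReal.ofReal (Q.side ^ m) := by
          exact mul_le_mul_right (hKRvol Q) _
  calc ENNReal.ofReal (β/2 * ρ^m)
      = ENNReal.ofReal (β/2) * ENNReal.ofReal ρ ^ m := by
        rw [ENNReal.ofReal_mul (by positivity), ENNReal.ofReal_pow hρpos.le]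
    _ = ENNReal.ofReal (β/2) * volume R := by rw [hvolR]
    _ = ∫⁻ _ in R, ENNReal.ofReal (β/2) := (setLIntegral_const R _).symm
    _ ≤ ∫⁻ w in R, ∑' Q : S, Gdiam f i0 Q.1 w := by
        apply lintegral_mono_ae
        rw [ae_restrict_iff' hRmeas]
        exact Filter.Eventually.of_forall hpoint
    _ = ∑' Q : S, ∫⁻ w in R, Gdiam f i0 Q.1 w :=
        lintegral_tsum fun Q => (aemeasurable_Gdiam f hf i0 Q.1 _)
    _ ≤ ∑' Q : S, hContent 1 (f '' Q.1.toSet) * ENNReal.ofReal (Q.1.side ^ m) :=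
        ENNReal.tsum_le_tsum fun Q => perQ Q.1

end
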